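/- Let (Ω, P) be a probability space, E a finite set, (η_e)_{e∈E} a family of {0,1}-valued random variables on Ω, and (q_e)_{e∈E} numbers in [0,1] such that for every subset S ⊆ E: P[η_e = 1 for all e ∈ S] ≤ ∏_{e∈S} q_e. Let (η*_e)_{e∈E} be a family of independent random variables on some probability space with P[η*_e = 1] = q_e and P[η*_e = 0] = 1 − q_e. Then for every integer k ≥ 0: E[(Σ_{e∈E} η_e)^k] ≤ E[(Σ_{e∈E} η*_e)^k]. -/

import Mathlib

open MeasureTheory ProbabilityTheory

lemma key_moment {Ω : Type*} [MeasurableSpace Ω] (P : Measure Ω) [IsProbabilityMeasure P]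
    {E : Type*} [Fintype E] [DecidableEq E]
    (η : E → Ω → ℕ) (hηmeas : ∀ e, Measurable (η e))
    (hη01 : ∀ e ω, η e ω = 0 ∨ η e ω = 1) (k : ℕ) :
    ∫ ω, (((∑ e, η e ω : ℕ) : ℝ)) ^ k ∂P
      = ∑ f : Fin k → E,
          (P {ω | ∀ e ∈ Finset.image f Finset.univ, η e ω = 1}).toReal := by
  have hSet : ∀ (S : Finset E), MeasurableSet {ω | ∀ e ∈ S, η e ω = 1} := by
    intro S
    have : {ω | ∀ e ∈ S, η e ω = 1} = ⋂ e ∈ S, (η e) ⁻¹' {1} := by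
      ext ω; simp [Set.mem_iInter]
    rw [this]
    exact MeasurableSet.biInter S.countable_toSet fun e _ => (hηmeas e) (measurableSet_singleton 1)
  have hEq : ∀ (f : Fin k → E) (ω : Ω),
      (∏ i, ((η (f i) ω : ℕ) : ℝ))
        = Set.indicator {ω | ∀ e ∈ Finset.image f Finset.univ, η e ω = 1} (fun _ => (1:ℝ)) ω := by
    intro f ω
    by_cases h : ∀ e ∈ Finset.image f Finset.univ, η e ω = 1
    · have hm : ω ∈ {ω | ∀ e ∈ Finset.image f Finset.univ, η e ω = 1} := h
      rw [Set.indicator_of_mem hm]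
      have : ∀ i, η (f i) ω = 1 := fun i => h (f i) (Finset.mem_image_of_mem f (Finset.mem_univ i))
      simp [this]
    · rw [Set.indicator_of_notMem (show ω ∉ {ω | ∀ e ∈ Finset.image f Finset.univ, η e ω = 1} from h)]
      push_neg at h
      obtain ⟨e, he, hne⟩ := h
      obtain ⟨i, -, rfl⟩ := Finset.mem_image.mp he
      have h0 : η (f i) ω = 0 := (hη01 (f i) ω).resolve_right hne
      exact Finset.prod_eq_zero (Finset.mem_univ i) (by simp [h0])
  have hrw : ∀ ω, (((∑ e, η e ω : ℕ) : ℝ)) ^ k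
      = ∑ f : Fin k → E, Set.indicator {ω | ∀ e ∈ Finset.image f Finset.univ, η e ω = 1} (fun _ => (1:ℝ)) ω := by
    intro ω
    push_cast
    rw [Fintype.sum_pow]
    exact Finset.sum_congr rfl fun f _ => hEq f ω
  simp only [hrw]
  rw [integral_finset_sum]
  · refine Finset.sum_congr rfl fun f _ => ?_
    exact integral_indicator_one (hSet _)
  · intro f _
    exact (integrable_const (1:ℝ)).indicator (hSet _)

/-- If a finite family of `{0,1}`-valued random variables `η` is negatively
correlated with marginals bounded by `q`, and `η'` is an independent family of
Bernoulli(`q_e`) random variables, then every moment of `Σ η_e` is bounded by the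
corresponding moment of `Σ η'_e`. -/
theorem moments_le_of_neg_correlated
    {Ω Ω' : Type*} [MeasurableSpace Ω] [MeasurableSpace Ω']
    (P : Measure Ω) [IsProbabilityMeasure P]
    (P' : Measure Ω') [IsProbabilityMeasure P']
    {E : Type*} [Fintype E]
    (η : E → Ω → ℕ) (hηmeas : ∀ e, Measurable (η e))
    (hη01 : ∀ e ω, η e ω = 0 ∨ η e ω = 1)
    (q : E → ℝ) (hq : ∀ e, q e ∈ Set.Icc (0 : ℝ) 1)
    (hneg : ∀ S : Finset E,
      P {ω | ∀ e ∈ S, η e ω = 1} ≤ ENNReal.ofReal (∏ e ∈ S, q e))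
    (η' : E → Ω' → ℕ) (hη'meas : ∀ e, Measurable (η' e))
    (hη'01 : ∀ e ω, η' e ω = 0 ∨ η' e ω = 1)
    (hind : iIndepFun η' P')
    (hmarg1 : ∀ e, P' {ω | η' e ω = 1} = ENNReal.ofReal (q e))
    (hmarg0 : ∀ e, P' {ω | η' e ω = 0} = ENNReal.ofReal (1 - q e)) :
    ∀ k : ℕ,
      ∫ ω, (((∑ e, η e ω : ℕ) : ℝ)) ^ k ∂P ≤
        ∫ ω, (((∑ e, η' e ω : ℕ) : ℝ)) ^ k ∂P' := by
  intro k
  classical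
  rw [key_moment P η hηmeas hη01 k, key_moment P' η' hη'meas hη'01 k]
  refine Finset.sum_le_sum fun f _ => ?_
  set S := Finset.image f Finset.univ with hS
  -- compute P' side exactly
  have hP' : P' {ω | ∀ e ∈ S, η' e ω = 1} = ENNReal.ofReal (∏ e ∈ S, q e) := by
    have hset : {ω | ∀ e ∈ S, η' e ω = 1} = ⋂ e ∈ S, (η' e) ⁻¹' {1} := by
      ext ω; simp [Set.mem_iInter]
    rw [hset, hind.meas_biInter (fun e _ => ⟨{1}, measurableSet_singleton 1, rfl⟩)]
    rw [ENNReal.ofReal_prod_of_nonneg (fun e _ => (hq e).1)]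
    exact Finset.prod_congr rfl fun e _ => hmarg1 e
  rw [hP']
  rw [ENNReal.toReal_ofReal (Finset.prod_nonneg fun e _ => (hq e).1)]
  exact ENNReal.toReal_le_of_le_ofReal (Finset.prod_nonneg fun e _ => (hq e).1) (hneg S)
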